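/- Let f be a cut-saturating pseudo-flow on network G saturating the cut δ(S,T) with s ∈ S, t ∈ T. If no vertex in T has positive excess and no vertex in S has positive deficit, then δ(S,T) is a minimum s–t cut, and moreover f can be augmented to a feasible maximum flow saturating the same cut by routing excess in S back to s within S and routing flow from t to deficits within T. -/

import Mathlib

open Finset

/-- A flow network on vertex set `V`: integral capacities, a source `s` and a sink `t`. -/
structure Network (V : Type) where
  c : V → V → ℤ
  s : V
  t : V
  st_ne : s ≠ t
  cap_nonneg : ∀ u v, 0 ≤ c u v

variable {V : Type} [Fintype V] [DecidableEq V]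

/-- A pseudo-flow: capacity constraints only. -/
def IsPseudoflow (N : Network V) (f : V → V → ℤ) : Prop :=
  ∀ u v, 0 ≤ f u v ∧ f u v ≤ N.c u v

def inflow (f : V → V → ℤ) (u : V) : ℤ := ∑ v, f v u
def outflow (f : V → V → ℤ) (u : V) : ℤ := ∑ v, f u v
def netFlow (f : V → V → ℤ) (u : V) : ℤ := inflow f u - outflow f u
def exc (f : V → V → ℤ) (u : V) : ℤ := max (netFlow f u) 0
def deficit (f : V → V → ℤ) (u : V) : ℤ := max (- netFlow f u) 0

/-- A pre-flow: pseudo-flow with nonnegative excess at every non-terminal vertex. -/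
def IsPreflow (N : Network V) (f : V → V → ℤ) : Prop :=
  IsPseudoflow N f ∧ ∀ u, u ≠ N.s → u ≠ N.t → 0 ≤ netFlow f u

/-- A feasible flow: pseudo-flow satisfying conservation at non-terminals. -/
def IsFlow (N : Network V) (f : V → V → ℤ) : Prop :=
  IsPseudoflow N f ∧ ∀ u, u ≠ N.s → u ≠ N.t → netFlow f u = 0

/-- Value of a flow: net flow out of the source. -/
def flowValue (N : Network V) (f : V → V → ℤ) : ℤ := outflow f N.s - inflow f N.s

/-- Residual edge `(u,v)`: either the forward edge `(u,v)` is unsaturated, or the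
backward edge of `(v,u)` carries positive flow. -/
def ResEdge (N : Network V) (f : V → V → ℤ) (u v : V) : Prop :=
  f u v < N.c u v ∨ 0 < f v u

/-- Reachability in the residual graph. -/
def ResReach (N : Network V) (f : V → V → ℤ) : V → V → Prop :=
  Relation.ReflTransGen (ResEdge N f)

/-- Edge of the underlying network. -/
def GEdge (N : Network V) (u v : V) : Prop := 0 < N.c u v

/-- `f` saturates the cut `δ(S,T)`: every edge from `S` to `T` is at capacity and
every edge from `T` to `S` carries zero flow. -/
def SaturatesCut (N : Network V) (f : V → V → ℤ) (S T : Finset V) : Prop :=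
  ∀ u ∈ S, ∀ v ∈ T, f u v = N.c u v ∧ f v u = 0

/-- `(S,T)` is an s–t cut partition of the vertices. -/
def IsCutPartition (N : Network V) (S T : Finset V) : Prop :=
  S ∪ T = Finset.univ ∧ Disjoint S T ∧ N.s ∈ S ∧ N.t ∈ T

/-- Capacity of the cut `δ(S,T)`. -/
def cutCap (N : Network V) (S T : Finset V) : ℤ := ∑ u ∈ S, ∑ v ∈ T, N.c u v

/-- Valid heights for Push-Relabel: `h s = n`, `h t = 0`, and `h u ≤ h v + 1`
for every residual edge `(u,v)`. -/
def ValidHeights (N : Network V) (f : V → V → ℤ) (h : V → ℕ) : Prop :=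
  h N.s = Fintype.card V ∧ h N.t = 0 ∧ ∀ u v, ResEdge N f u v → h u ≤ h v + 1

set_option linter.unusedSectionVars false

-- push one unit across a residual edge
lemma pushEdge {N : Network V} {f : V → V → ℤ} (hpf : IsPseudoflow N f) {a b : V}
    (hres : ResEdge N f a b) :
    ∃ f', IsPseudoflow N f' ∧ (∀ p q, f' p q ≠ f p q → (p = a ∧ q = b) ∨ (p = b ∧ q = a)) ∧
      ∀ z, netFlow f' z = netFlow f z - (if z = a then 1 else 0) + (if z = b then 1 else 0) := by
  by_cases h : f a b < N.c a b
  · refine ⟨fun p q => f p q + (if p = a ∧ q = b then 1 else 0), ?_, ?_, ?_⟩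
    · intro u v
      by_cases huv : u = a ∧ v = b
      · rcases huv with ⟨rfl, rfl⟩
        simp only [if_pos (⟨rfl, rfl⟩ : u = u ∧ v = v)]
        have h1 := (hpf u v).1
        exact ⟨by omega, by omega⟩
      · simp only [if_neg huv, add_zero]; exact hpf u v
    · intro p q hne
      by_cases hpq : p = a ∧ q = b
      · exact Or.inl hpq
      · simp [if_neg hpq] at hne
    · intro z
      simp only [netFlow, inflow, outflow, Finset.sum_add_distrib]
      have h1 : ∑ v : V, (if v = a ∧ z = b then (1:ℤ) else 0) = (if z = b then 1 else 0) := by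
        by_cases hz : z = b <;> simp [hz]
      have h2 : ∑ v : V, (if z = a ∧ v = b then (1:ℤ) else 0) = (if z = a then 1 else 0) := by
        by_cases hz : z = a <;> simp [hz]
      rw [h1, h2]; ring
  · have hba : 0 < f b a := hres.resolve_left h
    refine ⟨fun p q => f p q - (if p = b ∧ q = a then 1 else 0), ?_, ?_, ?_⟩
    · intro u v
      by_cases huv : u = b ∧ v = a
      · rcases huv with ⟨rfl, rfl⟩
        simp only [if_pos (⟨rfl, rfl⟩ : u = u ∧ v = v)]
        have h1 := (hpf u v).2
        exact ⟨by omega, by omega⟩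
      · simp only [if_neg huv, sub_zero]; exact hpf u v
    · intro p q hne
      by_cases hpq : p = b ∧ q = a
      · exact Or.inr hpq
      · simp [if_neg hpq] at hne
    · intro z
      simp only [netFlow, inflow, outflow, Finset.sum_sub_distrib]
      have h1 : ∑ v : V, (if v = b ∧ z = a then (1:ℤ) else 0) = (if z = a then 1 else 0) := by
        by_cases hz : z = a <;> simp [hz]
      have h2 : ∑ v : V, (if z = b ∧ v = a then (1:ℤ) else 0) = (if z = b then 1 else 0) := by
        by_cases hz : z = b <;> simp [hz]
      rw [h1, h2]; ring

lemma resEdge_congr {N : Network V} {f f' : V → V → ℤ} {p q : V}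
    (h1 : f' p q = f p q) (h2 : f' q p = f q p) : ResEdge N f' p q ↔ ResEdge N f p q := by
  unfold ResEdge; rw [h1, h2]

-- push one unit along a node-disjoint residual chain
lemma pushChain {N : Network V} :
    ∀ (l : List V) (x : V) (f : V → V → ℤ), IsPseudoflow N f →
      List.Chain (ResEdge N f) x l → (x::l).Nodup →
      ∀ y, (x::l).getLast (List.cons_ne_nil _ _) = y → x ≠ y →
      ∃ f', IsPseudoflow N f' ∧
        (∀ p q, f' p q ≠ f p q → p ∈ x :: l ∧ q ∈ x :: l) ∧
        ∀ z, netFlow f' z = netFlow f z - (if z = x then 1 else 0) + (if z = y then 1 else 0) := by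
  intro l
  induction l with
  | nil =>
    intro x f _ _ _ y hy hxy
    exact absurd hy hxy
  | cons b l' ih =>
    intro x f hpf hch hnd y hy hxy
    simp only [List.Chain, List.isChain_cons_cons] at hch
    obtain ⟨hxb, hch'⟩ := hch
    obtain ⟨f1, hf1pf, hf1diff, hf1net⟩ := pushEdge hpf hxb
    have hxnot : x ∉ b :: l' := (List.nodup_cons.mp hnd).1
    by_cases hby : b = y
    · subst hby
      have hlast : (b :: l').getLast (List.cons_ne_nil _ _) = b := by
        have h0 : (x :: b :: l').getLast (List.cons_ne_nil _ _) =
            (b :: l').getLast (List.cons_ne_nil _ _) := List.getLast_cons (List.cons_ne_nil _ _)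
        exact h0.symm.trans hy
      have hl' : l' = [] := by
        by_contra hne
        have h2 : (b :: l').getLast (List.cons_ne_nil _ _) = l'.getLast hne :=
          List.getLast_cons hne
        have hbl : b ∈ l' := by
          rw [h2] at hlast; rw [← hlast]; exact List.getLast_mem hne
        exact (List.nodup_cons.mp (List.nodup_cons.mp hnd).2).1 hbl
      subst hl'
      refine ⟨f1, hf1pf, ?_, hf1net⟩
      intro p q hne
      rcases hf1diff p q hne with ⟨rfl, rfl⟩ | ⟨rfl, rfl⟩ <;> simp
    · -- b ≠ y
      have hch1 : List.Chain (ResEdge N f1) b l' := by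
        have hmem : ∀ p ∈ b :: l', ∀ q ∈ b :: l', f1 p q = f p q := by
          intro p hp q hq
          by_contra hne
          rcases hf1diff p q hne with ⟨rfl, _⟩ | ⟨_, rfl⟩
          · exact hxnot hp
          · exact hxnot hq
        have : ∀ (m : List V) (c : V), c ∈ b :: l' → (∀ z ∈ m, z ∈ b :: l') →
            List.Chain (ResEdge N f) c m → List.Chain (ResEdge N f1) c m := by
          intro m
          induction m with
          | nil => intro c _ _ _; exact List.Chain.nil
          | cons d m' ihm =>
            intro c hc hm hch
            simp only [List.Chain, List.isChain_cons_cons] at hch ⊢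
            have hd : d ∈ b :: l' := hm d (by simp)
            refine ⟨(resEdge_congr (hmem c hc d hd) (hmem d hd c hc)).mpr hch.1,
              ihm d hd (fun z hz => hm z (by simp [hz])) hch.2⟩
        exact this l' b (by simp) (fun z hz => by simp [hz]) hch'
      have hnd' : (b :: l').Nodup := (List.nodup_cons.mp hnd).2
      have hy' : (b :: l').getLast (List.cons_ne_nil _ _) = y := by
        rw [List.getLast_cons (List.cons_ne_nil _ _)] at hy; exact hy
      obtain ⟨f2, hf2pf, hf2diff, hf2net⟩ := ih b f1 hf1pf hch1 hnd' y hy' hby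
      refine ⟨f2, hf2pf, ?_, ?_⟩
      · intro p q hne
        by_cases h1 : f1 p q = f p q
        · have : f2 p q ≠ f1 p q := by rw [h1]; exact hne
          have := hf2diff p q this
          exact ⟨List.mem_cons_of_mem _ this.1, List.mem_cons_of_mem _ this.2⟩
        · rcases hf1diff p q h1 with ⟨rfl, rfl⟩ | ⟨rfl, rfl⟩ <;> simp
      · intro z
        rw [hf2net z, hf1net z]
        have hxb' : x ≠ b := fun h => hxnot (h ▸ List.mem_cons_self)
        by_cases hzx : z = x <;> by_cases hzb : z = b <;> by_cases hzy : z = y <;>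
          simp_all <;> ring

lemma chain_dedup' {α : Type*} [DecidableEq α] {r : α → α → Prop} :
    ∀ (n : ℕ) (l : List α) (a : α), l.length ≤ n → List.Chain r a l →
    ∃ l', List.Sublist l' l ∧ List.Chain r a l' ∧
      (a::l').getLast (List.cons_ne_nil _ _) = (a::l).getLast (List.cons_ne_nil _ _) ∧
      (a::l').Nodup := by
  intro n
  induction n with
  | zero =>
    intro l a hlen hch
    have : l = [] := List.eq_nil_of_length_eq_zero (Nat.le_zero.mp hlen)
    subst this
    exact ⟨[], List.Sublist.refl _, List.Chain.nil, rfl, List.nodup_singleton a⟩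
  | succ n ih =>
    intro l a hlen hch
    by_cases ha : a ∈ l
    · obtain ⟨l1, l2, rfl⟩ := List.append_of_mem ha
      have hch1 : List.Chain' r (a :: (l1 ++ a :: l2)) := hch
      have hsuf : List.IsSuffix (a :: l2) (a :: (l1 ++ a :: l2)) := ⟨a :: l1, by simp⟩
      have hch2 : List.Chain r a l2 := List.IsChain.suffix hch1 hsuf
      have hlen2 : l2.length ≤ n := by
        have := hlen; simp [List.length_append] at this; omega
      obtain ⟨l', hsub, hch', hlast', hnodup⟩ := ih l2 a hlen2 hch2
      refine ⟨l', hsub.trans ?_, hch', ?_, hnodup⟩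
      · exact (List.sublist_cons_self a l2).trans (List.sublist_append_right l1 (a :: l2))
      · rw [hlast']
        rw [show ((a :: (l1 ++ a :: l2)).getLast (List.cons_ne_nil _ _)) =
            ((a :: l1) ++ (a :: l2)).getLast (by simp) from by congr 1]
        rw [List.getLast_append_of_ne_nil _ (List.cons_ne_nil _ _)]
    · cases l with
      | nil => exact ⟨[], List.Sublist.refl _, List.Chain.nil, rfl, List.nodup_singleton a⟩
      | cons b l'' =>
        simp only [List.Chain, List.isChain_cons_cons] at hch
        obtain ⟨hab, hch''⟩ := hch
        have hlen'' : l''.length ≤ n := by simp at hlen; omega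
        obtain ⟨l3, hsub, hch3, hlast3, hnodup3⟩ := ih l'' b hlen'' hch''
        refine ⟨b :: l3, hsub.cons₂ b, List.Chain.cons hab hch3, ?_, ?_⟩
        · rw [List.getLast_cons (List.cons_ne_nil _ _), List.getLast_cons (List.cons_ne_nil _ _)]
          exact hlast3
        · rw [List.nodup_cons]
          refine ⟨fun hmem => ha ((hsub.cons₂ b).mem hmem), hnodup3⟩

lemma sum_netFlow (f : V → V → ℤ) (R : Finset V) :
    ∑ u ∈ R, netFlow f u = ∑ u ∈ R, ∑ v ∈ Rᶜ, (f v u - f u v) := by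
  have h : ∀ u, netFlow f u = (∑ v ∈ R, (f v u - f u v)) + ∑ v ∈ Rᶜ, (f v u - f u v) := by
    intro u
    rw [Finset.sum_add_sum_compl]
    simp [netFlow, inflow, outflow, Finset.sum_sub_distrib]
  rw [Finset.sum_congr rfl (fun u _ => h u), Finset.sum_add_distrib]
  have hz : ∑ u ∈ R, ∑ v ∈ R, (f v u - f u v) = 0 := by
    simp only [Finset.sum_sub_distrib]
    rw [Finset.sum_comm]
    exact sub_self _
  rw [hz, zero_add]

lemma exc_pos_iff {f : V → V → ℤ} {u : V} : 0 < exc f u ↔ 0 < netFlow f u := by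
  unfold exc; rw [lt_max_iff]; simp

lemma deficit_pos_iff {f : V → V → ℤ} {u : V} : 0 < deficit f u ↔ netFlow f u < 0 := by
  unfold deficit; rw [lt_max_iff]; simp

lemma exc_eq_zero_iff {f : V → V → ℤ} {u : V} : exc f u = 0 ↔ netFlow f u ≤ 0 := by
  unfold exc; exact max_eq_right_iff

lemma deficit_eq_zero_iff {f : V → V → ℤ} {u : V} : deficit f u = 0 ↔ 0 ≤ netFlow f u := by
  unfold deficit; rw [max_eq_right_iff]; omega

lemma exc_nonneg (f : V → V → ℤ) (u : V) : 0 ≤ exc f u := le_max_right _ _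
lemma deficit_nonneg (f : V → V → ℤ) (u : V) : 0 ≤ deficit f u := le_max_right _ _

lemma exists_flow (N : Network V) (S T : Finset V) (hun : S ∪ T = Finset.univ)
    (hdis : Disjoint S T) (hsS : N.s ∈ S) (htT : N.t ∈ T) :
    ∀ n : ℕ, ∀ g, IsPseudoflow N g → SaturatesCut N g S T →
    (∀ u ∈ T, u ≠ N.t → exc g u = 0) → (∀ u ∈ S, u ≠ N.s → deficit g u = 0) →
    (∑ u ∈ S.erase N.s, exc g u + ∑ u ∈ T.erase N.t, deficit g u).toNat ≤ n →
    ∃ g', IsFlow N g' ∧ SaturatesCut N g' S T := by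
  classical
  intro n
  induction n using Nat.strong_induction_on with
  | _ n ih =>
  intro g hpfg hsatg hexcg hdefg hbound
  have hSsum_nonneg : (0:ℤ) ≤ ∑ u ∈ S.erase N.s, exc g u :=
    Finset.sum_nonneg fun u _ => exc_nonneg g u
  have hTsum_nonneg : (0:ℤ) ≤ ∑ u ∈ T.erase N.t, deficit g u :=
    Finset.sum_nonneg fun u _ => deficit_nonneg g u
  by_cases hA : ∃ u ∈ S.erase N.s, 0 < exc g u
  · -- route excess in S back to s
    obtain ⟨u, huS', hupos⟩ := hA
    have huS : u ∈ S := Finset.mem_of_mem_erase huS'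
    have hus : u ≠ N.s := Finset.ne_of_mem_erase huS'
    have hnetu : 0 < netFlow g u := exc_pos_iff.mp hupos
    set R : Finset V := Finset.univ.filter (fun w => ResReach N g u w) with hR
    have hmemR : ∀ w, w ∈ R ↔ ResReach N g u w := by intro w; simp [hR]
    have hRS : ∀ w ∈ R, w ∈ S := by
      intro w hw
      rw [hmemR] at hw
      induction hw with
      | refl => exact huS
      | @tail b c _ e ihw =>
        have hc : c ∈ S ∪ T := hun ▸ Finset.mem_univ c
        rcases Finset.mem_union.mp hc with h | h
        · exact h
        · exfalso
          obtain ⟨e1, e2⟩ := hsatg b ihw c h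
          rcases e with e | e
          · omega
          · omega
    have hsR : N.s ∈ R := by
      by_contra hsnR
      have hnonneg : ∀ w ∈ R, 0 ≤ netFlow g w := by
        intro w hw
        have hwS := hRS w hw
        have hws : w ≠ N.s := fun h => hsnR (h ▸ hw)
        exact deficit_eq_zero_iff.mp (hdefg w hwS hws)
      have hpos : 0 < ∑ w ∈ R, netFlow g w :=
        Finset.sum_pos' hnonneg ⟨u, (hmemR u).mpr Relation.ReflTransGen.refl, hnetu⟩
      have hle : ∑ w ∈ R, netFlow g w ≤ 0 := by
        rw [sum_netFlow]
        apply Finset.sum_nonpos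
        intro w hw
        apply Finset.sum_nonpos
        intro v hv
        rw [Finset.mem_compl] at hv
        have hnres : ¬ ResEdge N g w v :=
          fun hres => hv ((hmemR v).mpr (((hmemR w).mp hw).tail hres))
        unfold ResEdge at hnres
        push_neg at hnres
        have h1 := (hpfg w v).1
        omega
      omega
    obtain ⟨l0, hch0, hlast0⟩ :=
      List.exists_isChain_cons_of_relationReflTransGen ((hmemR _).mp hsR)
    obtain ⟨l, _, hch, hlast, hnd⟩ := chain_dedup' l0.length l0 u le_rfl hch0
    have hlasts : (u::l).getLast (List.cons_ne_nil _ _) = N.s := hlast.trans hlast0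
    have hvert : ∀ z ∈ u :: l, z ∈ S := by
      intro z hz
      rcases List.mem_cons.mp hz with rfl | hz'
      · exact huS
      · exact hRS z ((hmemR z).mpr
          (List.IsChain.cons_induction (ResReach N g u) l hch
            (fun ⦃x y⦄ rxy hx => hx.tail rxy) Relation.ReflTransGen.refl z hz'))
    obtain ⟨g1, hg1pf, hg1diff, hg1net⟩ := pushChain l u g hpfg hch hnd N.s hlasts hus
    have hTnotS : ∀ a ∈ T, a ∉ S := fun a ha => Finset.disjoint_right.mp hdis ha
    have hg1T : ∀ a ∈ T, ∀ b, g1 a b = g a b ∧ g1 b a = g b a := by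
      intro a ha b
      constructor
      · by_contra hne; exact hTnotS a ha (hvert a (hg1diff a b hne).1)
      · by_contra hne; exact hTnotS a ha (hvert a (hg1diff b a hne).2)
    have hsat1 : SaturatesCut N g1 S T := by
      intro a ha b hb
      obtain ⟨e1, e2⟩ := hsatg a ha b hb
      exact ⟨(hg1T b hb a).2.trans e1, (hg1T b hb a).1.trans e2⟩
    have hnetother : ∀ z, z ≠ u → z ≠ N.s → netFlow g1 z = netFlow g z := by
      intro z h1 h2
      rw [hg1net z, if_neg h1, if_neg h2]; ring
    have hnetT : ∀ w ∈ T, netFlow g1 w = netFlow g w := fun w hw =>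
      hnetother w (fun h => hTnotS w hw (h ▸ huS)) (fun h => hTnotS w hw (h ▸ hsS))
    have hexc1 : ∀ w ∈ T, w ≠ N.t → exc g1 w = 0 := by
      intro w hw hwt
      have := hexcg w hw hwt
      unfold exc at this ⊢
      rw [hnetT w hw]; exact this
    have hnetu1 : netFlow g1 u = netFlow g u - 1 := by
      rw [hg1net u, if_pos rfl, if_neg hus]; ring
    have hdef1 : ∀ w ∈ S, w ≠ N.s → deficit g1 w = 0 := by
      intro w hwS hws
      by_cases hwu : w = u
      · subst hwu
        rw [deficit_eq_zero_iff, hnetu1]; omega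
      · rw [deficit_eq_zero_iff, hnetother w hwu hws, ← deficit_eq_zero_iff]
        exact hdefg w hwS hws
    have hΦ1 : ∑ w ∈ S.erase N.s, exc g1 w < ∑ w ∈ S.erase N.s, exc g w := by
      apply Finset.sum_lt_sum
      · intro i hi
        by_cases hiu : i = u
        · subst hiu
          unfold exc; rw [hnetu1]
          exact max_le_max (by omega) le_rfl
        · rw [show exc g1 i = exc g i from by
            unfold exc; rw [hnetother i hiu (Finset.ne_of_mem_erase hi)]]
      · refine ⟨u, huS', ?_⟩
        unfold exc
        rw [hnetu1, max_eq_left (by omega), max_eq_left (by omega)]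
        omega
    have hΦ2 : ∑ w ∈ T.erase N.t, deficit g1 w = ∑ w ∈ T.erase N.t, deficit g w :=
      Finset.sum_congr rfl fun w hw => by
        unfold deficit; rw [hnetT w (Finset.mem_of_mem_erase hw)]
    have hS1_nonneg : (0:ℤ) ≤ ∑ u ∈ S.erase N.s, exc g1 u :=
      Finset.sum_nonneg fun u _ => exc_nonneg g1 u
    have hT1_nonneg : (0:ℤ) ≤ ∑ u ∈ T.erase N.t, deficit g1 u :=
      Finset.sum_nonneg fun u _ => deficit_nonneg g1 u
    exact ih (∑ w ∈ S.erase N.s, exc g1 w + ∑ w ∈ T.erase N.t, deficit g1 w).toNat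
      (by omega) g1 hg1pf hsat1 hexc1 hdef1 le_rfl
  · by_cases hB : ∃ v ∈ T.erase N.t, 0 < deficit g v
    · -- route deficit in T from t
      obtain ⟨v, hvT', hvpos⟩ := hB
      have hvT : v ∈ T := Finset.mem_of_mem_erase hvT'
      have hvt : v ≠ N.t := Finset.ne_of_mem_erase hvT'
      have hnetv : netFlow g v < 0 := deficit_pos_iff.mp hvpos
      set R : Finset V := Finset.univ.filter (fun w => ResReach N g w v) with hR
      have hmemR : ∀ w, w ∈ R ↔ ResReach N g w v := by intro w; simp [hR]
      have hRT : ∀ w ∈ R, w ∈ T := by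
        intro w hw
        rw [hmemR] at hw
        refine Relation.ReflTransGen.head_induction_on hw hvT ?_
        intro a c hac _ hcT
        have ha : a ∈ S ∪ T := hun ▸ Finset.mem_univ a
        rcases Finset.mem_union.mp ha with h | h
        · exfalso
          obtain ⟨e1, e2⟩ := hsatg a h c hcT
          rcases hac with e | e
          · omega
          · omega
        · exact h
      have htR : N.t ∈ R := by
        by_contra htnR
        have hnonpos : ∀ w ∈ R, netFlow g w ≤ 0 := by
          intro w hw
          have hwT := hRT w hw
          have hwt : w ≠ N.t := fun h => htnR (h ▸ hw)
          exact exc_eq_zero_iff.mp (hexcg w hwT hwt)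
        have hneg : ∑ w ∈ R, netFlow g w < 0 := by
          have h1 : ∑ w ∈ R, netFlow g w ≤ ∑ w ∈ R, (0:ℤ) := by
            apply Finset.sum_le_sum; intro i hi; exact hnonpos i hi
          have h2 : ∑ w ∈ R, netFlow g w ≠ 0 := by
            intro h0
            have hvR : v ∈ R := (hmemR v).mpr Relation.ReflTransGen.refl
            have := Finset.sum_eq_zero_iff_of_nonpos (fun i hi => hnonpos i hi) |>.mp ?_ v hvR
            · omega
            · simpa using h0
          simp at h1; omega
        have hge : 0 ≤ ∑ w ∈ R, netFlow g w := by
          rw [sum_netFlow]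
          apply Finset.sum_nonneg
          intro w hw
          apply Finset.sum_nonneg
          intro v' hv'
          rw [Finset.mem_compl] at hv'
          have hnres : ¬ ResEdge N g v' w :=
            fun hres => hv' ((hmemR v').mpr (Relation.ReflTransGen.head hres ((hmemR w).mp hw)))
          unfold ResEdge at hnres
          push_neg at hnres
          have h1 := (hpfg w v').1
          have h2 := (hpfg v' w).1
          omega
        omega
      obtain ⟨l0, hch0, hlast0⟩ :=
        List.exists_isChain_cons_of_relationReflTransGen ((hmemR _).mp htR)
      obtain ⟨l, _, hch, hlast, hnd⟩ := chain_dedup' l0.length l0 N.t le_rfl hch0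
      have hlastv : (N.t::l).getLast (List.cons_ne_nil _ _) = v := hlast.trans hlast0
      have htv : N.t ≠ v := fun h => hvt h.symm
      have hvert : ∀ z ∈ N.t :: l, z ∈ T := by
        intro z hz
        have : ResReach N g z v :=
          List.IsChain.backwards_induction (fun w => ResReach N g w v) (N.t :: l) hch
            (fun ⦃x y⦄ rxy hy => Relation.ReflTransGen.head rxy hy)
            (fun _ => by rw [hlastv]; exact Relation.ReflTransGen.refl) z hz
        exact hRT z ((hmemR z).mpr this)
      obtain ⟨g1, hg1pf, hg1diff, hg1net⟩ := pushChain l N.t g hpfg hch hnd v hlastv htv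
      have hSnotT : ∀ a ∈ S, a ∉ T := fun a ha => Finset.disjoint_left.mp hdis ha
      have hg1S : ∀ a ∈ S, ∀ b, g1 a b = g a b ∧ g1 b a = g b a := by
        intro a ha b
        constructor
        · by_contra hne; exact hSnotT a ha (hvert a (hg1diff a b hne).1)
        · by_contra hne; exact hSnotT a ha (hvert a (hg1diff b a hne).2)
      have hsat1 : SaturatesCut N g1 S T := by
        intro a ha b hb
        obtain ⟨e1, e2⟩ := hsatg a ha b hb
        exact ⟨(hg1S a ha b).1.trans e1, (hg1S a ha b).2.trans e2⟩
      have hnetother : ∀ z, z ≠ N.t → z ≠ v → netFlow g1 z = netFlow g z := by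
        intro z h1 h2
        rw [hg1net z, if_neg h1, if_neg h2]; ring
      have hnetS : ∀ w ∈ S, netFlow g1 w = netFlow g w := fun w hw =>
        hnetother w (fun h => hSnotT w hw (h ▸ htT)) (fun h => hSnotT w hw (h ▸ hvT))
      have hdef1 : ∀ w ∈ S, w ≠ N.s → deficit g1 w = 0 := by
        intro w hw hws
        rw [deficit_eq_zero_iff, hnetS w hw, ← deficit_eq_zero_iff]
        exact hdefg w hw hws
      have hnetv1 : netFlow g1 v = netFlow g v + 1 := by
        rw [hg1net v, if_neg (fun h => htv h.symm), if_pos rfl]; ring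
      have hexc1 : ∀ w ∈ T, w ≠ N.t → exc g1 w = 0 := by
        intro w hw hwt
        by_cases hwv : w = v
        · subst hwv
          rw [exc_eq_zero_iff, hnetv1]; omega
        · rw [exc_eq_zero_iff, hnetother w hwt hwv, ← exc_eq_zero_iff]
          exact hexcg w hw hwt
      have hΦ1 : ∑ w ∈ T.erase N.t, deficit g1 w < ∑ w ∈ T.erase N.t, deficit g w := by
        apply Finset.sum_lt_sum
        · intro i hi
          by_cases hiv : i = v
          · subst hiv
            unfold deficit; rw [hnetv1]
            exact max_le_max (by omega) le_rfl
          · rw [show deficit g1 i = deficit g i from by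
              unfold deficit; rw [hnetother i (Finset.ne_of_mem_erase hi) hiv]]
        · refine ⟨v, hvT', ?_⟩
          unfold deficit
          rw [hnetv1, max_eq_left (by omega), max_eq_left (by omega)]
          omega
      have hΦ2 : ∑ w ∈ S.erase N.s, exc g1 w = ∑ w ∈ S.erase N.s, exc g w :=
        Finset.sum_congr rfl fun w hw => by
          unfold exc; rw [hnetS w (Finset.mem_of_mem_erase hw)]
      have hS1_nonneg : (0:ℤ) ≤ ∑ u ∈ S.erase N.s, exc g1 u :=
        Finset.sum_nonneg fun u _ => exc_nonneg g1 u
      have hT1_nonneg : (0:ℤ) ≤ ∑ u ∈ T.erase N.t, deficit g1 u :=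
        Finset.sum_nonneg fun u _ => deficit_nonneg g1 u
      exact ih (∑ w ∈ S.erase N.s, exc g1 w + ∑ w ∈ T.erase N.t, deficit g1 w).toNat
        (by omega) g1 hg1pf hsat1 hexc1 hdef1 le_rfl
    · -- no problems left: g is a flow
      push_neg at hA hB
      refine ⟨g, ⟨hpfg, ?_⟩, hsatg⟩
      intro w hws hwt
      have hw : w ∈ S ∪ T := hun ▸ Finset.mem_univ w
      rcases Finset.mem_union.mp hw with h | h
      · have h1 := deficit_eq_zero_iff.mp (hdefg w h hws)
        have h2 := hA w (Finset.mem_erase.mpr ⟨hws, h⟩)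
        have h3 := exc_nonneg g w
        have h4 : exc g w = 0 := le_antisymm h2 h3
        have := exc_eq_zero_iff.mp h4
        omega
      · have h1 := exc_eq_zero_iff.mp (hexcg w h hwt)
        have h2 := hB w (Finset.mem_erase.mpr ⟨hwt, h⟩)
        have h3 := deficit_nonneg g w
        have h4 : deficit g w = 0 := le_antisymm h2 h3
        have := deficit_eq_zero_iff.mp h4
        omega

lemma partition_compl {S T : Finset V} (hun : S ∪ T = Finset.univ) (hdis : Disjoint S T) :
    T = Sᶜ := by
  ext w
  rw [Finset.mem_compl]
  constructor
  · intro hw hs; exact Finset.disjoint_left.mp hdis hs hw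
  · intro hs
    have : w ∈ S ∪ T := hun ▸ Finset.mem_univ w
    rcases Finset.mem_union.mp this with h | h
    · exact absurd h hs
    · exact h

lemma flowValue_eq_neg_sum {N : Network V} {g : V → V → ℤ} (hg : IsFlow N g)
    {S' : Finset V} (hs : N.s ∈ S') (ht : N.t ∉ S') :
    flowValue N g = - ∑ u ∈ S', netFlow g u := by
  have hsum : ∑ u ∈ S', netFlow g u = netFlow g N.s := by
    apply Finset.sum_eq_single_of_mem N.s hs
    intro b hb hbs
    exact hg.2 b hbs (fun h => ht (h ▸ hb))
  rw [hsum]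
  unfold flowValue netFlow
  ring

lemma weak_duality {N : Network V} {g : V → V → ℤ} (hg : IsFlow N g)
    {S' T' : Finset V} (hpart : IsCutPartition N S' T') :
    flowValue N g ≤ cutCap N S' T' := by
  obtain ⟨hun, hdis, hsS, htT⟩ := hpart
  have hTc : T' = S'ᶜ := partition_compl hun hdis
  subst hTc
  have ht : N.t ∉ S' := Finset.mem_compl.mp htT
  rw [flowValue_eq_neg_sum hg hsS ht, sum_netFlow]
  unfold cutCap
  rw [← Finset.sum_neg_distrib]
  apply Finset.sum_le_sum
  intro u _
  rw [← Finset.sum_neg_distrib]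
  apply Finset.sum_le_sum
  intro v _
  have h1 := (hg.1 u v).2
  have h2 := (hg.1 v u).1
  omega

lemma value_of_saturating {N : Network V} {g : V → V → ℤ} (hg : IsFlow N g)
    {S T : Finset V} (hpart : IsCutPartition N S T) (hsat : SaturatesCut N g S T) :
    flowValue N g = cutCap N S T := by
  obtain ⟨hun, hdis, hsS, htT⟩ := hpart
  have hTc : T = Sᶜ := partition_compl hun hdis
  subst hTc
  have ht : N.t ∉ S := Finset.mem_compl.mp htT
  rw [flowValue_eq_neg_sum hg hsS ht, sum_netFlow]
  unfold cutCap
  rw [← Finset.sum_neg_distrib]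
  apply Finset.sum_congr rfl
  intro u hu
  rw [← Finset.sum_neg_distrib]
  apply Finset.sum_congr rfl
  intro v hv
  obtain ⟨e1, e2⟩ := hsat u hu v hv
  omega


/-- if a pseudo-flow saturates `δ(S,T)` with no excess in `T` and no
deficit in `S`, then `δ(S,T)` is a minimum cut, and `f` can be augmented to a
feasible maximum flow saturating the same cut. -/
theorem stmt8 (N : Network V) (f : V → V → ℤ) (S T : Finset V)
    (hpf : IsPseudoflow N f)
    (hconn : ∀ u : V, Relation.ReflTransGen (GEdge N) N.s u ∧
      Relation.ReflTransGen (GEdge N) u N.t)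
    (hpart : IsCutPartition N S T) (hsat : SaturatesCut N f S T)
    (hexc : ∀ u ∈ T, u ≠ N.t → exc f u = 0)
    (hdef : ∀ u ∈ S, u ≠ N.s → deficit f u = 0) :
    (∀ S' T' : Finset V, IsCutPartition N S' T' → cutCap N S T ≤ cutCap N S' T') ∧
    ∃ g : V → V → ℤ, IsFlow N g ∧ SaturatesCut N g S T ∧
      ∀ g', IsFlow N g' → flowValue N g' ≤ flowValue N g := by
  obtain ⟨hun, hdis, hsS, htT⟩ := hpart
  obtain ⟨g, hgflow, hgsat⟩ := exists_flow N S T hun hdis hsS htT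
    (∑ u ∈ S.erase N.s, exc f u + ∑ u ∈ T.erase N.t, deficit f u).toNat
    f hpf hsat hexc hdef le_rfl
  have hgval : flowValue N g = cutCap N S T :=
    value_of_saturating hgflow ⟨hun, hdis, hsS, htT⟩ hgsat
  constructor
  · intro S' T' hpart'
    rw [← hgval]
    exact weak_duality hgflow hpart'
  · refine ⟨g, hgflow, hgsat, fun g' hg' => ?_⟩
    rw [hgval]
    exact weak_duality hg' ⟨hun, hdis, hsS, htT⟩
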